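/- Let 0 < ε ≤ 1/2, let X ⊆ ℝ^d be finite and (k,ε)-irreducible with optimal k-means partition X₁,…,X_k, let 1 ≤ i < k, and let C_i be a set of i centers satisfying the invariant P(i). Let j ∈ J and s ∈ Y_j. Perform L = ⌈2²³·k²/ε⁴⌉ independent sampling trials, where each trial draws x via D²-sampling from X w.r.t. C_i and, if x ∈ X_j, outputs x with probability (ε/128)·Φ(C_i,{s})/Φ(C_i,{x}) (otherwise the trial outputs nothing); let T be the multiset of points output over the L trials. Then Pr[ |T| ≥ 64k/ε ] ≥ 1 − 1/(4k), and conditioned on its size, T is a uniform i.i.d. sample from X_j. -/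

import Mathlib

open Finset
open scoped BigOperators
open Classical

noncomputable section

/-- Points of `ℝ^d`. -/
abbrev Pt (d : ℕ) := EuclideanSpace ℝ (Fin d)

/-- `Φ(C, X) = Σ_{x ∈ X} min_{c ∈ C} ‖x - c‖²`. -/
noncomputable def Phi {d : ℕ} (C X : Finset (Pt d)) : ℝ :=
  ∑ x ∈ X, sInf ((fun c => ‖x - c‖ ^ 2) '' (C : Set (Pt d)))

/-- The centroid `μ(X)` of a finite set of points. -/
noncomputable def ctr {d : ℕ} (X : Finset (Pt d)) : Pt d :=
  (X.card : ℝ)⁻¹ • ∑ x ∈ X, x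

/-- `Δ₁(X) = Φ({μ(X)}, X)`. -/
noncomputable def Delta1 {d : ℕ} (X : Finset (Pt d)) : ℝ := Phi {ctr X} X

/-- `Δ_k(X)`: the optimal `k`-means cost of `X`. -/
noncomputable def DeltaK {d : ℕ} (k : ℕ) (X : Finset (Pt d)) : ℝ :=
  sInf ((fun C => Phi C X) '' {C : Finset (Pt d) | C.card = k})

/-- `X₁, …, X_k` is an optimal `k`-means partition of `X`. -/
def IsOptPartition {d : ℕ} (k : ℕ) (X : Finset (Pt d)) (Xs : Fin k → Finset (Pt d)) : Prop :=
  (∀ j, (Xs j).Nonempty) ∧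
  (∀ j l, j ≠ l → Disjoint (Xs j) (Xs l)) ∧
  Finset.univ.biUnion Xs = X ∧
  ∑ j, Delta1 (Xs j) = DeltaK k X

/-- `X` is `(k, ε)`-irreducible: `Δ_{k-1}(X) ≥ (1+ε)·Δ_k(X)`. -/
def KIrreducible {d : ℕ} (k : ℕ) (ε : ℝ) (X : Finset (Pt d)) : Prop :=
  (1 + ε) * DeltaK k X ≤ DeltaK (k - 1) X

/-- The invariant `P(i)`: `Ci` consists of the centers `c r` for `r < i` (clusters reindexed
so that the covered clusters come first), each `c r` is a `(1 + ε/16)`-good center for the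
optimal cluster `Xs r`, and `Φ(Ci, X) > 0`. -/
def InvariantP {d k : ℕ} (ε : ℝ) (X : Finset (Pt d)) (Xs : Fin k → Finset (Pt d))
    (i : ℕ) (c : Fin k → Pt d) (Ci : Finset (Pt d)) : Prop :=
  Ci = Finset.image c (Finset.univ.filter (fun r : Fin k => r.val < i)) ∧
  (∀ r : Fin k, r.val < i → Phi {c r} (Xs r) ≤ (1 + ε / 16) * Delta1 (Xs r)) ∧
  0 < Phi Ci X

/-- The outcome distribution of one sampling trial: draw `x ∈ X` by `D²`-sampling w.r.t.
`Ci`; if `x ∈ Xs j`, output `some x` with probability `(ε/128)·Φ(Ci,{s})/Φ(Ci,{x})`;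
otherwise the trial outputs `none`. -/
noncomputable def trialW {d k : ℕ} (X : Finset (Pt d)) (Xs : Fin k → Finset (Pt d))
    (Ci : Finset (Pt d)) (j : Fin k) (ε : ℝ) (s : Pt d) : Option {x // x ∈ X} → ℝ
  | none => 1 - ∑ x ∈ Xs j, (Phi Ci {x} / Phi Ci X) * ((ε / 128) * Phi Ci {s} / Phi Ci {x})
  | some x =>
    if (x : Pt d) ∈ Xs j then
      (Phi Ci {(x : Pt d)} / Phi Ci X) * ((ε / 128) * Phi Ci {s} / Phi Ci {(x : Pt d)})
    else 0


-- ===== auxiliary lemmas =====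

lemma sInf_nonneg' {d : ℕ} (C : Finset (Pt d)) (x : Pt d) :
    0 ≤ sInf ((fun c => ‖x - c‖ ^ 2) '' (C : Set (Pt d))) :=
  Real.sInf_nonneg (by rintro y ⟨c, _, rfl⟩; positivity)

lemma Phi_nonneg {d : ℕ} (C X : Finset (Pt d)) : 0 ≤ Phi C X :=
  Finset.sum_nonneg fun x _ => sInf_nonneg' C x

lemma Phi_le_point {d : ℕ} (C X : Finset (Pt d)) {c : Pt d} (hc : c ∈ C) :
    Phi C X ≤ ∑ x ∈ X, ‖x - c‖ ^ 2 := by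
  apply Finset.sum_le_sum
  intro x _
  exact csInf_le ⟨0, by rintro y ⟨c', _, rfl⟩; positivity⟩ ⟨c, hc, rfl⟩

lemma Phi_singleton {d : ℕ} (c : Pt d) (X : Finset (Pt d)) :
    Phi {c} X = ∑ x ∈ X, ‖x - c‖ ^ 2 := by
  unfold Phi
  refine Finset.sum_congr rfl fun x _ => ?_
  rw [Finset.coe_singleton, Set.image_singleton, csInf_singleton]

lemma Phi_point_le {d : ℕ} (C : Finset (Pt d)) (x : Pt d) {c : Pt d} (hc : c ∈ C) :
    Phi C {x} ≤ ‖x - c‖ ^ 2 := by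
  have := Phi_le_point C {x} hc
  simpa using this

lemma Phi_mono_pts {d : ℕ} (C : Finset (Pt d)) {X Y : Finset (Pt d)} (h : X ⊆ Y) :
    Phi C X ≤ Phi C Y :=
  Finset.sum_le_sum_of_subset_of_nonneg h fun x _ _ => sInf_nonneg' C x

lemma Phi_anti_centers {d : ℕ} {C C' : Finset (Pt d)} (hC : C.Nonempty) (h : C ⊆ C')
    (X : Finset (Pt d)) : Phi C' X ≤ Phi C X := by
  apply Finset.sum_le_sum
  intro x _
  apply csInf_le_csInf ⟨0, by rintro y ⟨c', _, rfl⟩; positivity⟩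
  · exact (hC.to_set.image _)
  · exact Set.image_mono (by exact_mod_cast h)

lemma DeltaK_le {d : ℕ} {k : ℕ} (X : Finset (Pt d)) {C : Finset (Pt d)} (h : C.card = k) :
    DeltaK k X ≤ Phi C X :=
  csInf_le ⟨0, by rintro y ⟨C', _, rfl⟩; exact Phi_nonneg _ _⟩ ⟨C, h, rfl⟩

lemma DeltaK_nonneg {d : ℕ} (k : ℕ) (X : Finset (Pt d)) : 0 ≤ DeltaK k X :=
  Real.sInf_nonneg (by rintro y ⟨C, _, rfl⟩; exact Phi_nonneg _ _)

lemma Delta1_nonneg {d : ℕ} (X : Finset (Pt d)) : 0 ≤ Delta1 X := Phi_nonneg _ _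

lemma Delta1_eq {d : ℕ} (X : Finset (Pt d)) :
    Delta1 X = ∑ x ∈ X, ‖x - ctr X‖ ^ 2 := Phi_singleton _ _

lemma biasVar {d : ℕ} {S : Finset (Pt d)} (hS : S.Nonempty) (c : Pt d) :
    ∑ x ∈ S, ‖x - c‖ ^ 2 = Delta1 S + (S.card : ℝ) * ‖ctr S - c‖ ^ 2 := by
  rw [Delta1_eq]
  set μ : Pt d := ctr S with hμ
  have hcard : (S.card : ℝ) ≠ 0 := by
    exact_mod_cast Finset.card_ne_zero_of_mem hS.choose_spec
  have hsum : ∑ x ∈ S, (x - μ) = 0 := by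
    rw [Finset.sum_sub_distrib, Finset.sum_const, hμ, ctr, ← Nat.cast_smul_eq_nsmul ℝ, smul_smul,
      mul_inv_cancel₀ hcard, one_smul, sub_self]
  have key : ∀ x : Pt d, ‖x - c‖ ^ 2
      = ‖x - μ‖ ^ 2 + 2 * (inner ℝ (x - μ) (μ - c) : ℝ) + ‖μ - c‖ ^ 2 := by
    intro x
    have h : x - c = (x - μ) + (μ - c) := by abel
    rw [h, @norm_add_sq_real]
  calc ∑ x ∈ S, ‖x - c‖ ^ 2
      = ∑ x ∈ S, (‖x - μ‖ ^ 2 + 2 * (inner ℝ (x - μ) (μ - c) : ℝ) + ‖μ - c‖ ^ 2) :=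
        Finset.sum_congr rfl fun x _ => key x
    _ = (∑ x ∈ S, ‖x - μ‖ ^ 2) + 2 * (inner ℝ (∑ x ∈ S, (x - μ)) (μ - c) : ℝ)
        + (S.card : ℝ) * ‖μ - c‖ ^ 2 := by
        rw [Finset.sum_add_distrib, Finset.sum_add_distrib, sum_inner, Finset.sum_const,
          nsmul_eq_mul, ← Finset.mul_sum]
    _ = _ := by rw [hsum, inner_zero_left]; ring

section Part
variable {d k : ℕ} {X : Finset (Pt d)} {Xs : Fin k → Finset (Pt d)}
  (hopt : IsOptPartition k X Xs)
include hopt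

lemma Phi_partition (C : Finset (Pt d)) :
    Phi C X = ∑ r, Phi C (Xs r) := by
  rw [← hopt.2.2.1]
  rw [Phi, Finset.sum_biUnion]
  · rfl
  · intro a _ b _ hab
    exact hopt.2.1 a b hab

lemma Delta1_le_DeltaK (r : Fin k) : Delta1 (Xs r) ≤ DeltaK k X := by
  rw [← hopt.2.2.2]
  exact Finset.single_le_sum (fun l _ => Delta1_nonneg _) (Finset.mem_univ r)

omit hopt in
lemma infinitePt (hd : 1 ≤ d) : Infinite (Pt d) := by
  have hnt : Nontrivial (Pt d) := by
    have : Nonempty (Fin d) := ⟨⟨0, hd⟩⟩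
    infer_instance
  obtain ⟨v, hv⟩ := exists_ne (0 : Pt d)
  exact Infinite.of_injective (fun r : ℝ => r • v) (smul_left_injective ℝ hv)

lemma voronoi (hI : Infinite (Pt d)) (hk : 0 < k) {r : Fin k} {x : Pt d} (hx : x ∈ Xs r)
    (l : Fin k) : ‖x - ctr (Xs r)‖ ^ 2 ≤ ‖x - ctr (Xs l)‖ ^ 2 := by
  set M : Finset (Pt d) := Finset.image (fun r => ctr (Xs r)) Finset.univ with hM
  have hMne : M.Nonempty := ⟨ctr (Xs ⟨0, hk⟩), Finset.mem_image_of_mem _ (Finset.mem_univ _)⟩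
  have hmem : ∀ r : Fin k, ctr (Xs r) ∈ M := fun r =>
    Finset.mem_image_of_mem _ (Finset.mem_univ _)
  obtain ⟨M', hMM', hcard'⟩ := Infinite.exists_superset_card_eq M k
    (le_trans (Finset.card_image_le) (by simp))
  have h2 : DeltaK k X ≤ Phi M X :=
    le_trans (DeltaK_le X hcard') (Phi_anti_centers hMne hMM' X)
  have h1 : ∀ r : Fin k, Phi M (Xs r) ≤ Delta1 (Xs r) := fun r => by
    rw [Delta1_eq]; exact Phi_le_point M (Xs r) (hmem r)
  have heq : Phi M X = ∑ r, Delta1 (Xs r) := by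
    apply le_antisymm
    · rw [Phi_partition hopt M]; exact Finset.sum_le_sum fun r _ => h1 r
    · rw [hopt.2.2.2]; exact h2
  have hsum0 : ∑ r, (Delta1 (Xs r) - Phi M (Xs r)) = 0 := by
    rw [Finset.sum_sub_distrib, ← heq, ← Phi_partition hopt M, sub_self]
  have hterm : Delta1 (Xs r) - Phi M (Xs r) = 0 := by
    rw [Finset.sum_eq_zero_iff_of_nonneg (fun l _ => sub_nonneg.mpr (h1 l))] at hsum0
    exact hsum0 r (Finset.mem_univ r)
  -- pointwise equality within cluster r
  have hterm2 : ∑ y ∈ Xs r, (‖y - ctr (Xs r)‖ ^ 2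
      - sInf ((fun c => ‖y - c‖ ^ 2) '' (M : Set (Pt d)))) = 0 := by
    rw [Finset.sum_sub_distrib, ← Delta1_eq, sub_eq_zero]
    exact (sub_eq_zero.mp hterm).symm ▸ rfl
  have hpt : ‖x - ctr (Xs r)‖ ^ 2
      = sInf ((fun c => ‖x - c‖ ^ 2) '' (M : Set (Pt d))) := by
    have hnn : ∀ y ∈ Xs r, 0 ≤ ‖y - ctr (Xs r)‖ ^ 2
        - sInf ((fun c => ‖y - c‖ ^ 2) '' (M : Set (Pt d))) := fun y _ =>
      sub_nonneg.mpr (csInf_le ⟨0, by rintro z ⟨c', _, rfl⟩; positivity⟩ ⟨_, (by exact_mod_cast hmem r), rfl⟩)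
    rw [Finset.sum_eq_zero_iff_of_nonneg hnn] at hterm2
    have := hterm2 x hx
    linarith
  calc ‖x - ctr (Xs r)‖ ^ 2 = _ := hpt
    _ ≤ ‖x - ctr (Xs l)‖ ^ 2 :=
      csInf_le ⟨0, by rintro z ⟨c', _, rfl⟩; positivity⟩ ⟨_, (by exact_mod_cast hmem l), rfl⟩

lemma merge (hirr : KIrreducible k ε X) (hI : Infinite (Pt d)) (hk2 : 2 ≤ k)
    {j l : Fin k} (hjl : j ≠ l) :
    ε * DeltaK k X ≤ ((Xs l).card : ℝ) * ‖ctr (Xs j) - ctr (Xs l)‖ ^ 2 := by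
  classical
  set g : Fin k → Pt d := fun r => if r = l then ctr (Xs j) else ctr (Xs r) with hg
  set M : Finset (Pt d) := Finset.image g Finset.univ with hM
  have hMne : M.Nonempty := ⟨g j, Finset.mem_image_of_mem _ (Finset.mem_univ _)⟩
  have hmem : ∀ r : Fin k, g r ∈ M := fun r => Finset.mem_image_of_mem _ (Finset.mem_univ _)
  have hcardM : M.card ≤ k - 1 := by
    have hMsub : M ⊆ Finset.image g (Finset.univ.erase l) := by
      intro y hy
      rw [hM, Finset.mem_image] at hy
      obtain ⟨r, _, rfl⟩ := hy
      by_cases hr : r = l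
      · subst hr
        have : g r = g j := by simp [hg, hjl]
        rw [this]
        exact Finset.mem_image_of_mem _ (Finset.mem_erase.mpr ⟨hjl, Finset.mem_univ _⟩)
      · exact Finset.mem_image_of_mem _ (Finset.mem_erase.mpr ⟨hr, Finset.mem_univ _⟩)
    calc M.card ≤ _ := Finset.card_le_card hMsub
      _ ≤ (Finset.univ.erase l).card := Finset.card_image_le
      _ = k - 1 := by rw [Finset.card_erase_of_mem (Finset.mem_univ _)]; simp
  obtain ⟨M', hMM', hcard'⟩ := Infinite.exists_superset_card_eq M (k - 1) hcardM
  have h2 : DeltaK (k - 1) X ≤ Phi M X :=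
    le_trans (DeltaK_le X hcard') (Phi_anti_centers hMne hMM' X)
  have h1 : Phi M X ≤ DeltaK k X + ((Xs l).card : ℝ) * ‖ctr (Xs j) - ctr (Xs l)‖ ^ 2 := by
    rw [Phi_partition hopt M]
    have hb : ∀ r : Fin k, Phi M (Xs r)
        ≤ Delta1 (Xs r) + (if r = l then ((Xs l).card : ℝ) * ‖ctr (Xs j) - ctr (Xs l)‖ ^ 2 else 0) := by
      intro r
      by_cases hr : r = l
      · subst hr
        have := Phi_le_point M (Xs r) (hmem r)
        rw [if_pos rfl] at *
        have hgr : g r = ctr (Xs j) := by simp [hg]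
        rw [hgr] at this
        calc Phi M (Xs r) ≤ ∑ x ∈ Xs r, ‖x - ctr (Xs j)‖ ^ 2 := this
          _ = Delta1 (Xs r) + ((Xs r).card : ℝ) * ‖ctr (Xs r) - ctr (Xs j)‖ ^ 2 :=
            biasVar (hopt.1 r) _
          _ = Delta1 (Xs r) + ((Xs r).card : ℝ) * ‖ctr (Xs j) - ctr (Xs r)‖ ^ 2 := by
            rw [norm_sub_rev]
      · have := Phi_le_point M (Xs r) (hmem r)
        have hgr : g r = ctr (Xs r) := by simp [hg, hr]
        rw [hgr] at this
        rw [if_neg hr, add_zero, Delta1_eq]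
        exact this
    calc ∑ r, Phi M (Xs r) ≤ ∑ r, (Delta1 (Xs r)
        + (if r = l then ((Xs l).card : ℝ) * ‖ctr (Xs j) - ctr (Xs l)‖ ^ 2 else 0)) :=
        Finset.sum_le_sum fun r _ => hb r
      _ = DeltaK k X + ((Xs l).card : ℝ) * ‖ctr (Xs j) - ctr (Xs l)‖ ^ 2 := by
        rw [Finset.sum_add_distrib, hopt.2.2.2, Finset.sum_ite_eq' Finset.univ l]
        simp
  have := hirr
  rw [KIrreducible] at this
  nlinarith [h2, h1, this]
end Part

lemma sq_le_nonneg {a b : ℝ} (ha : 0 ≤ a) (hb : 0 ≤ b) (h : a ^ 2 ≤ b ^ 2) : a ≤ b := by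
  nlinarith [sq_nonneg (a - b), sq_nonneg (a + b)]

lemma d_pos {d : ℕ} (C X : Finset (Pt d)) (h : 0 < Phi C X) : 1 ≤ d := by
  by_contra hd
  have hd0 : d = 0 := by omega
  subst hd0
  have : Phi C X = 0 := by
    apply le_antisymm _ (Phi_nonneg C X)
    apply Finset.sum_nonpos
    intro x _
    rcases C.eq_empty_or_nonempty with hC | ⟨c0, hc0⟩
    · subst hC; simp [Real.sInf_empty]
    · apply csInf_le ⟨0, by rintro z ⟨c', _, rfl⟩; positivity⟩
      refine ⟨c0, hc0, ?_⟩
      have : x - c0 = 0 := Subsingleton.elim _ _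
      simp [this]
  linarith

lemma Phi_point {d : ℕ} (C : Finset (Pt d)) (x : Pt d) :
    Phi C {x} = sInf ((fun c => ‖x - c‖ ^ 2) '' (C : Set (Pt d))) := by
  simp [Phi]

section Key
variable {d k : ℕ} {ε : ℝ} {X : Finset (Pt d)} {Xs : Fin k → Finset (Pt d)}
  {i : ℕ} {c : Fin k → Pt d} {Ci : Finset (Pt d)} {j : Fin k}

set_option maxHeartbeats 1000000 in
lemma keyGeom (hε0 : 0 < ε) (hε : ε ≤ 1 / 2)
    (hirr : KIrreducible k ε X) (hopt : IsOptPartition k X Xs)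
    (hi : 1 ≤ i) (hik : i < k)
    (hCi : Ci = Finset.image c (Finset.univ.filter (fun r : Fin k => r.val < i)))
    (hgood : ∀ r : Fin k, r.val < i → Phi {c r} (Xs r) ≤ (1 + ε / 16) * Delta1 (Xs r))
    (hpos : 0 < Phi Ci X) (hj : i ≤ j.val)
    {x : Pt d} (hx : x ∈ Xs j) :
    (ε / 32) * Phi Ci (Xs j) ≤ ((Xs j).card : ℝ) * Phi Ci {x} := by
  classical
  have hI : Infinite (Pt d) := infinitePt (d_pos Ci X hpos)
  have hk : 0 < k := by omega
  have hk2 : 2 ≤ k := by omega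
  set μ : Fin k → Pt d := fun r => ctr (Xs r) with hμ
  set F : Finset (Fin k) := Finset.univ.filter (fun r : Fin k => r.val < i) with hF
  have hFne : F.Nonempty := ⟨⟨0, hk⟩, by simp [hF]; omega⟩
  obtain ⟨r0, hr0F, hr0min⟩ := Finset.exists_min_image F (fun r => ‖μ j - μ r‖) hFne
  set D : ℝ := ‖μ j - μ r0‖ with hD
  have hD0 : 0 ≤ D := norm_nonneg _
  have cardpos : ∀ r : Fin k, 0 < ((Xs r).card : ℝ) := fun r => by
    exact_mod_cast Finset.card_pos.mpr (hopt.1 r)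
  -- facts per r ∈ F
  have hrne : ∀ r ∈ F, r ≠ j := by
    intro r hr
    rw [hF, Finset.mem_filter] at hr
    intro hrj; subst hrj; omega
  have hcmu : ∀ r ∈ F, ‖c r - μ r‖ ≤ ‖μ j - μ r‖ / 4 := by
    intro r hr
    have hrF := hr
    rw [hF, Finset.mem_filter] at hrF
    have hg := hgood r hrF.2
    rw [Phi_singleton, biasVar (hopt.1 r)] at hg
    have h1 : ((Xs r).card : ℝ) * ‖μ r - c r‖ ^ 2 ≤ (ε / 16) * Delta1 (Xs r) := by
      nlinarith [Delta1_nonneg (Xs r)]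
    have h2 : Delta1 (Xs r) ≤ DeltaK k X := Delta1_le_DeltaK hopt r
    have h3 : ε * DeltaK k X ≤ ((Xs r).card : ℝ) * ‖μ j - μ r‖ ^ 2 :=
      merge hopt hirr hI hk2 (hrne r hr).symm
    have h4 : ‖μ r - c r‖ ^ 2 ≤ (‖μ j - μ r‖ / 4) ^ 2 := by
      have := cardpos r
      nlinarith [DeltaK_nonneg k X]
    rw [norm_sub_rev]
    exact sq_le_nonneg (norm_nonneg _) (by positivity) h4
  have hlow : ∀ r ∈ F, ‖μ j - μ r‖ / 4 ≤ ‖x - c r‖ := by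
    intro r hr
    have hv : ‖x - μ j‖ ^ 2 ≤ ‖x - μ r‖ ^ 2 := voronoi hopt hI hk hx r
    have hv' : ‖x - μ j‖ ≤ ‖x - μ r‖ := sq_le_nonneg (norm_nonneg _) (norm_nonneg _) hv
    have htri : ‖μ j - μ r‖ ≤ ‖μ j - x‖ + ‖x - μ r‖ := by
      have := dist_triangle (μ j) x (μ r); simpa [dist_eq_norm] using this
    have htri1 : ‖μ j - μ r‖ ≤ 2 * ‖x - μ r‖ := by
      rw [norm_sub_rev (μ j) x] at htri; linarith
    have htri2 : ‖x - μ r‖ ≤ ‖x - c r‖ + ‖c r - μ r‖ := by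
      have := dist_triangle x (c r) (μ r); simpa [dist_eq_norm] using this
    have := hcmu r hr
    linarith
  have hCine : Ci.Nonempty := by
    rw [hCi]; exact ⟨c r0, Finset.mem_image_of_mem _ hr0F⟩
  -- lower bound on Phi Ci {x}
  have hxlow : (D / 4) ^ 2 ≤ Phi Ci {x} := by
    rw [Phi_point]
    apply le_csInf ((hCine.to_set).image _)
    rintro b ⟨c', hc', rfl⟩
    rw [hCi] at hc'
    simp only [Finset.coe_image, Set.mem_image, Finset.mem_coe] at hc'
    obtain ⟨r, hrF', rfl⟩ := hc'
    have hrF'' : r ∈ F := by rwa [hF]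
    have h1 := hlow r hrF''
    have h2 : D / 4 ≤ ‖μ j - μ r‖ / 4 := by
      have := hr0min r hrF''; linarith
    have : D / 4 ≤ ‖x - c r‖ := le_trans h2 h1
    exact pow_le_pow_left₀ (by positivity) this 2
  -- upper bound on Phi Ci (Xs j)
  have hup : ε * Phi Ci (Xs j) ≤ 2 * ((Xs j).card : ℝ) * D ^ 2 := by
    have hc0 : c r0 ∈ Ci := by rw [hCi]; exact Finset.mem_image_of_mem _ hr0F
    have h1 : Phi Ci (Xs j) ≤ ∑ y ∈ Xs j, ‖y - c r0‖ ^ 2 := Phi_le_point Ci (Xs j) hc0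
    rw [biasVar (hopt.1 j)] at h1
    have h2 : ‖μ j - c r0‖ ≤ D + D / 4 := by
      have htri : ‖μ j - c r0‖ ≤ ‖μ j - μ r0‖ + ‖μ r0 - c r0‖ := by
        have := dist_triangle (μ j) (μ r0) (c r0); simpa [dist_eq_norm] using this
      have h3 := hcmu r0 hr0F
      rw [norm_sub_rev (c r0)] at h3
      linarith
    have h2' : ‖μ j - c r0‖ ^ 2 ≤ (25 / 16) * D ^ 2 := by
      nlinarith [norm_nonneg (μ j - c r0)]
    have h4 : ε * Delta1 (Xs j) ≤ ((Xs j).card : ℝ) * D ^ 2 := by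
      have h5 : ε * DeltaK k X ≤ ((Xs j).card : ℝ) * ‖μ r0 - μ j‖ ^ 2 :=
        merge hopt hirr hI hk2 (hrne r0 hr0F)
      rw [norm_sub_rev] at h5
      have h6 : Delta1 (Xs j) ≤ DeltaK k X := Delta1_le_DeltaK hopt j
      nlinarith
    have hcj := cardpos j
    have hctrj : ctr (Xs j) = μ j := rfl
    rw [hctrj] at h1
    have hmm : (0:ℝ) ≤ ((Xs j).card : ℝ) * ‖μ j - c r0‖ ^ 2 := by positivity
    have e2 := mul_le_mul_of_nonneg_left h2' hcj.le
    have e3 : ε * (((Xs j).card : ℝ) * ‖μ j - c r0‖ ^ 2)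
        ≤ (1 / 2) * (((Xs j).card : ℝ) * (25 / 16 * D ^ 2)) :=
      mul_le_mul hε e2 hmm (by norm_num)
    have e1 := mul_le_mul_of_nonneg_left h1 hε0.le
    have hD2 : (0:ℝ) ≤ ((Xs j).card : ℝ) * D ^ 2 := by positivity
    nlinarith [e1, e3, h4, hD2]
  -- conclude
  have hm := cardpos j
  have hstep : ((Xs j).card : ℝ) * (D / 4) ^ 2 ≤ ((Xs j).card : ℝ) * Phi Ci {x} :=
    mul_le_mul_of_nonneg_left hxlow (le_of_lt hm)
  nlinarith [hstep, hup]
end Key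

lemma momentsProd {α : Type*} [Fintype α] {L : ℕ} (w g : α → ℝ) (S : Finset (Fin L)) :
    ∑ ω : Fin L → α, (∏ t, w (ω t)) * ∏ t ∈ S, g (ω t)
      = (∑ o, w o * g o) ^ S.card * (∑ o, w o) ^ (L - S.card) := by
  classical
  have h1 : ∀ ω : Fin L → α, (∏ t, w (ω t)) * ∏ t ∈ S, g (ω t)
      = ∏ t, (if t ∈ S then w (ω t) * g (ω t) else w (ω t)) := by
    intro ω
    rw [Finset.prod_ite, Finset.prod_mul_distrib]
    have hfil : Finset.univ.filter (fun t => t ∈ S) = S := by ext t; simp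
    have hfil2 : Finset.univ.filter (fun t => ¬ t ∈ S) = Sᶜ := by ext t; simp
    rw [hfil, hfil2]
    have : (∏ t, w (ω t)) = (∏ t ∈ S, w (ω t)) * ∏ t ∈ Sᶜ, w (ω t) := by
      rw [← Finset.prod_mul_prod_compl S]
    rw [this]; ring
  calc ∑ ω : Fin L → α, (∏ t, w (ω t)) * ∏ t ∈ S, g (ω t)
      = ∑ ω : Fin L → α, ∏ t, (if t ∈ S then w (ω t) * g (ω t) else w (ω t)) :=
        Finset.sum_congr rfl fun ω _ => h1 ω
    _ = ∏ t, ∑ o, (if t ∈ S then w o * g o else w o) := by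
        rw [Fintype.prod_sum (fun t o => if t ∈ S then w o * g o else w o)]
    _ = ∏ t, (if t ∈ S then ∑ o, w o * g o else ∑ o, w o) := by
        refine Finset.prod_congr rfl fun t _ => ?_
        split_ifs <;> rfl
    _ = _ := by
        rw [Finset.prod_ite, Finset.prod_const, Finset.prod_const]
        have hfil : Finset.univ.filter (fun t => t ∈ S) = S := by ext t; simp
        have hfil2 : Finset.univ.filter (fun t => ¬ t ∈ S) = Sᶜ := by ext t; simp
        rw [hfil, hfil2, Finset.card_compl]
        simp

lemma var_eq {α : Type*} [Fintype α] {L : ℕ} (w g : α → ℝ) (hg : ∀ o, g o * g o = g o)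
    (hw1 : ∑ o, w o = 1) :
    ∑ ω : Fin L → α, (∏ t, w (ω t)) * ((∑ t, g (ω t)) - (L : ℝ) * (∑ o, w o * g o)) ^ 2
      = (L : ℝ) * (∑ o, w o * g o) * (1 - ∑ o, w o * g o) := by
  classical
  set p : ℝ := ∑ o, w o * g o with hp
  have hE0 : ∑ ω : Fin L → α, (∏ t, w (ω t)) = 1 := by
    have := momentsProd w g (∅ : Finset (Fin L))
    simpa [hw1] using this
  have hE1 : ∀ t : Fin L, (∑ ω : Fin L → α, (∏ u, w (ω u)) * g (ω t)) = p := by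
    intro t
    have := momentsProd w g ({t} : Finset (Fin L))
    simpa [hw1] using this
  have hE2 : ∀ t t' : Fin L, (∑ ω : Fin L → α, (∏ u, w (ω u)) * (g (ω t) * g (ω t')))
      = if t = t' then p else p ^ 2 := by
    intro t t'
    by_cases h : t = t'
    · subst h
      rw [if_pos rfl]
      calc ∑ ω : Fin L → α, (∏ u, w (ω u)) * (g (ω t) * g (ω t))
          = ∑ ω : Fin L → α, (∏ u, w (ω u)) * g (ω t) := by
            refine Finset.sum_congr rfl fun ω _ => by rw [hg]
        _ = p := hE1 t
    · rw [if_neg h]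
      have := momentsProd w g ({t, t'} : Finset (Fin L))
      rw [Finset.card_insert_of_notMem (by simpa using h), Finset.card_singleton] at this
      have hpair : ∀ ω : Fin L → α, (∏ u ∈ ({t, t'} : Finset (Fin L)), g (ω u))
          = g (ω t) * g (ω t') := fun ω => Finset.prod_pair h
      rw [hw1, one_pow, mul_one] at this
      calc ∑ ω : Fin L → α, (∏ u, w (ω u)) * (g (ω t) * g (ω t'))
          = ∑ ω : Fin L → α, (∏ u, w (ω u)) * ∏ u ∈ ({t, t'} : Finset (Fin L)), g (ω u) :=
            Finset.sum_congr rfl fun ω _ => by rw [hpair]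
        _ = p ^ 2 := this
  -- first moment
  have hM1 : ∑ ω : Fin L → α, (∏ t, w (ω t)) * (∑ t, g (ω t)) = (L : ℝ) * p := by
    calc ∑ ω : Fin L → α, (∏ t, w (ω t)) * (∑ t, g (ω t))
        = ∑ ω : Fin L → α, ∑ t, (∏ u, w (ω u)) * g (ω t) := by
          refine Finset.sum_congr rfl fun ω _ => by rw [Finset.mul_sum]
      _ = ∑ t, ∑ ω : Fin L → α, (∏ u, w (ω u)) * g (ω t) := Finset.sum_comm
      _ = ∑ t : Fin L, p := Finset.sum_congr rfl fun t _ => hE1 t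
      _ = (L : ℝ) * p := by simp [mul_comm]
  -- second moment
  have hM2 : ∑ ω : Fin L → α, (∏ t, w (ω t)) * (∑ t, g (ω t)) ^ 2
      = (L : ℝ) * p + ((L : ℝ) ^ 2 - (L : ℝ)) * p ^ 2 := by
    have expand : ∀ ω : Fin L → α, (∑ t, g (ω t)) ^ 2 = ∑ t, ∑ t', g (ω t) * g (ω t') := by
      intro ω
      rw [sq, Finset.sum_mul_sum]
    calc ∑ ω : Fin L → α, (∏ t, w (ω t)) * (∑ t, g (ω t)) ^ 2
        = ∑ ω : Fin L → α, ∑ t, ∑ t', (∏ u, w (ω u)) * (g (ω t) * g (ω t')) := by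
          refine Finset.sum_congr rfl fun ω _ => ?_
          rw [expand ω, Finset.mul_sum]
          exact Finset.sum_congr rfl fun t _ => by rw [Finset.mul_sum]
      _ = ∑ t, ∑ ω : Fin L → α, ∑ t', (∏ u, w (ω u)) * (g (ω t) * g (ω t')) := Finset.sum_comm
      _ = ∑ t, ∑ t', ∑ ω : Fin L → α, (∏ u, w (ω u)) * (g (ω t) * g (ω t')) :=
          Finset.sum_congr rfl fun t _ => Finset.sum_comm
      _ = ∑ t : Fin L, ∑ t' : Fin L, (if t = t' then p else p ^ 2) :=
          Finset.sum_congr rfl fun t _ => Finset.sum_congr rfl fun t' _ => hE2 t t'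
      _ = ∑ t : Fin L, (p + ((L : ℝ) - 1) * p ^ 2) := by
          refine Finset.sum_congr rfl fun t _ => ?_
          have h1 : ∀ t' : Fin L, (if t = t' then p else p ^ 2)
              = p ^ 2 + (if t = t' then p - p ^ 2 else 0) := fun t' => by
            split_ifs <;> ring
          rw [Finset.sum_congr rfl fun t' _ => h1 t', Finset.sum_add_distrib,
            Finset.sum_const, Finset.sum_ite_eq Finset.univ t (fun _ => p - p ^ 2)]
          simp; ring
      _ = (L : ℝ) * p + ((L : ℝ) ^ 2 - (L : ℝ)) * p ^ 2 := by
          rw [Finset.sum_const]; simp; ring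
  -- expand the square
  calc ∑ ω : Fin L → α, (∏ t, w (ω t)) * ((∑ t, g (ω t)) - (L : ℝ) * p) ^ 2
      = ∑ ω : Fin L → α, ((∏ t, w (ω t)) * (∑ t, g (ω t)) ^ 2
        - 2 * ((L : ℝ) * p) * ((∏ t, w (ω t)) * (∑ t, g (ω t)))
        + ((L : ℝ) * p) ^ 2 * (∏ t, w (ω t))) := by
        refine Finset.sum_congr rfl fun ω _ => by ring
    _ = ((L : ℝ) * p + ((L : ℝ) ^ 2 - (L : ℝ)) * p ^ 2)
        - 2 * ((L : ℝ) * p) * ((L : ℝ) * p) + ((L : ℝ) * p) ^ 2 * 1 := by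
        rw [Finset.sum_add_distrib, Finset.sum_sub_distrib, hM2, ← Finset.mul_sum,
          ← Finset.mul_sum, hM1, hE0]
    _ = (L : ℝ) * p * (1 - p) := by ring

lemma cheb {α : Type*} [Fintype α] {L : ℕ} (w g : α → ℝ) (hw0 : ∀ o, 0 ≤ w o)
    (hg01 : ∀ o, g o = 0 ∨ g o = 1) (hw1 : ∑ o, w o = 1) (M : ℝ)
    (hM : M ≤ (L : ℝ) * (∑ o, w o * g o)) :
    ((L : ℝ) * (∑ o, w o * g o) - M) ^ 2 *
      (∑ ω ∈ Finset.univ.filter (fun ω : Fin L → α => (∑ t, g (ω t)) < M), ∏ t, w (ω t))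
      ≤ (L : ℝ) * (∑ o, w o * g o) * (1 - ∑ o, w o * g o) := by
  classical
  set p : ℝ := ∑ o, w o * g o with hp
  set B : ℝ := (L : ℝ) * p with hB
  have hg : ∀ o, g o * g o = g o := fun o => by rcases hg01 o with h | h <;> rw [h] <;> ring
  have hW0 : ∀ ω : Fin L → α, 0 ≤ ∏ t, w (ω t) := fun ω =>
    Finset.prod_nonneg fun t _ => hw0 _
  have key : ∀ ω ∈ Finset.univ.filter (fun ω : Fin L → α => (∑ t, g (ω t)) < M),
      (B - M) ^ 2 * (∏ t, w (ω t)) ≤ (∏ t, w (ω t)) * ((∑ t, g (ω t)) - B) ^ 2 := by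
    intro ω hω
    rw [Finset.mem_filter] at hω
    have h1 : B - M ≤ B - (∑ t, g (ω t)) := by linarith [hω.2]
    have h2 : (0:ℝ) ≤ B - M := by linarith
    have h3 : (B - M) ^ 2 ≤ (B - (∑ t, g (ω t))) ^ 2 := by nlinarith
    have h4 : (B - (∑ t, g (ω t))) ^ 2 = ((∑ t, g (ω t)) - B) ^ 2 := by ring
    rw [h4] at h3
    calc (B - M) ^ 2 * (∏ t, w (ω t)) ≤ ((∑ t, g (ω t)) - B) ^ 2 * (∏ t, w (ω t)) :=
        mul_le_mul_of_nonneg_right h3 (hW0 ω)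
      _ = (∏ t, w (ω t)) * ((∑ t, g (ω t)) - B) ^ 2 := by ring
  calc (B - M) ^ 2 * (∑ ω ∈ Finset.univ.filter (fun ω : Fin L → α => (∑ t, g (ω t)) < M),
        ∏ t, w (ω t))
      = ∑ ω ∈ Finset.univ.filter (fun ω : Fin L → α => (∑ t, g (ω t)) < M),
        (B - M) ^ 2 * ∏ t, w (ω t) := Finset.mul_sum _ _ _
    _ ≤ ∑ ω ∈ Finset.univ.filter (fun ω : Fin L → α => (∑ t, g (ω t)) < M),
        (∏ t, w (ω t)) * ((∑ t, g (ω t)) - B) ^ 2 := Finset.sum_le_sum key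
    _ ≤ ∑ ω : Fin L → α, (∏ t, w (ω t)) * ((∑ t, g (ω t)) - B) ^ 2 :=
        Finset.sum_le_sum_of_subset_of_nonneg (Finset.filter_subset _ _)
          (fun ω _ _ => mul_nonneg (hW0 ω) (sq_nonneg _))
    _ = (L : ℝ) * p * (1 - p) := var_eq w g hg hw1


set_option maxHeartbeats 2000000 in
/-- Under the invariant `P(i)` (clusters reindexed so the covered clusters
are `X₁, …, X_i`), let `j ∈ J` and `s ∈ Y_j`. Perform `L = ⌈2²³·k²/ε⁴⌉` independent
sampling trials as in `trialW`, and let `T` be the multiset of accepted points. Then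
`Pr[|T| ≥ 64k/ε] ≥ 1 − 1/(4k)`, and, conditioned on its size, `T` is a uniform i.i.d.
sample from `X_j` — formalized as: the probability of any outcome pattern with accepted
set of trials `A` and prescribed accepted values in `X_j` does not depend on the values. -/
theorem stmt_15 {d k : ℕ} (ε : ℝ) (hε0 : 0 < ε) (hε : ε ≤ 1 / 2)
    (X : Finset (Pt d)) (hirr : KIrreducible k ε X)
    (Xs : Fin k → Finset (Pt d)) (hopt : IsOptPartition k X Xs)
    (i : ℕ) (hi : 1 ≤ i) (hik : i < k)
    (c : Fin k → Pt d) (Ci : Finset (Pt d)) (hinv : InvariantP ε X Xs i c Ci)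
    (j : Fin k) (hj : i ≤ j.val) (hjJ : (ε / (8 * k)) * Phi Ci X ≤ Phi Ci (Xs j))
    (s : Pt d) (hsX : s ∈ Xs j)
    (hsY : Phi Ci {s} ≤ (2 / ((Xs j).card : ℝ)) * Phi Ci (Xs j))
    (L : ℕ) (hL : L = ⌈(2 ^ 23 * k ^ 2 : ℝ) / ε ^ 4⌉₊) :
    (1 - 1 / (4 * k) ≤
      ∑ ω ∈ (Finset.univ : Finset (Fin L → Option {x // x ∈ X})).filter
          (fun ω => (64 * k / ε : ℝ) ≤
            ((Finset.univ.filter (fun t : Fin L => (ω t).isSome = true)).card : ℝ)),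
        ∏ t : Fin L, trialW X Xs Ci j ε s (ω t)) ∧
    (∀ A : Finset (Fin L), ∀ v v' : Fin L → {x // x ∈ X},
      (∀ t, (v t : Pt d) ∈ Xs j) → (∀ t, (v' t : Pt d) ∈ Xs j) →
      ∏ t : Fin L, trialW X Xs Ci j ε s (if t ∈ A then some (v t) else none) =
        ∏ t : Fin L, trialW X Xs Ci j ε s (if t ∈ A then some (v' t) else none)) := by
  classical
  obtain ⟨hCi, hgood, hpos⟩ := hinv
  have hsub : Xs j ⊆ X := by
    intro x hx
    rw [← hopt.2.2.1]
    exact Finset.mem_biUnion.mpr ⟨j, Finset.mem_univ j, hx⟩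
  have hk0 : (0:ℝ) < k := by exact_mod_cast (by omega : 0 < k)
  have hmj : (0:ℝ) < ((Xs j).card : ℝ) := by exact_mod_cast Finset.card_pos.mpr (hopt.1 j)
  have hΦj : 0 < Phi Ci (Xs j) := by
    refine lt_of_lt_of_le ?_ hjJ
    positivity
  have hkey : ∀ x ∈ Xs j, (ε / 32) * Phi Ci (Xs j) ≤ ((Xs j).card : ℝ) * Phi Ci {x} :=
    fun x hx => keyGeom hε0 hε hirr hopt hi hik hCi hgood hpos hj hx
  have hΦx : ∀ x ∈ Xs j, 0 < Phi Ci {x} := by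
    intro x hx
    have h := hkey x hx
    nlinarith
  have hΦXj : Phi Ci (Xs j) ≤ Phi Ci X := Phi_mono_pts Ci hsub
  set q : ℝ := ε / 128 * Phi Ci {s} / Phi Ci X with hq
  set w : Option {x // x ∈ X} → ℝ := trialW X Xs Ci j ε s with hw
  set g : Option {x // x ∈ X} → ℝ := fun o => if o.isSome then 1 else 0 with hgdef
  set p : ℝ := ((Xs j).card : ℝ) * q with hpdef
  have hq0 : 0 ≤ q := by
    have := (hΦx s hsX).le
    positivity
  have hwsome : ∀ x : {x // x ∈ X}, (x : Pt d) ∈ Xs j → w (some x) = q := by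
    intro x hx
    have h1 : Phi Ci {(x : Pt d)} ≠ 0 := (hΦx _ hx).ne'
    have h2 : Phi Ci X ≠ 0 := hpos.ne'
    show trialW X Xs Ci j ε s (some x) = q
    rw [trialW, if_pos hx, hq]
    field_simp
  have hwsome0 : ∀ x : {x // x ∈ X}, (x : Pt d) ∉ Xs j → w (some x) = 0 := by
    intro x hx
    show trialW X Xs Ci j ε s (some x) = 0
    rw [trialW, if_neg hx]
  have htermq : ∀ x ∈ Xs j,
      (Phi Ci {x} / Phi Ci X) * ((ε / 128) * Phi Ci {s} / Phi Ci {x}) = q := by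
    intro x hx
    have h1 : Phi Ci {x} ≠ 0 := (hΦx x hx).ne'
    have h2 : Phi Ci X ≠ 0 := hpos.ne'
    rw [hq]
    field_simp
  have hsumj : ∑ x ∈ Xs j, (Phi Ci {x} / Phi Ci X) * ((ε / 128) * Phi Ci {s} / Phi Ci {x}) = p := by
    rw [Finset.sum_congr rfl htermq, Finset.sum_const, nsmul_eq_mul, hpdef]
  have hwnone : w none = 1 - p := by
    show trialW X Xs Ci j ε s none = 1 - p
    rw [trialW, hsumj]
  have hplow : ε ^ 3 / (2 ^ 15 * k) ≤ p := by
    have h1 := hkey s hsX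
    have h2 : (ε / (8 * k)) * Phi Ci X ≤ Phi Ci (Xs j) := hjJ
    rw [hpdef, hq]
    rw [div_le_iff₀ (by positivity : (0:ℝ) < 2 ^ 15 * k)]
    have hX := hpos
    have hexp : ((Xs j).card : ℝ) * (ε / 128 * Phi Ci {s} / Phi Ci X) * (2 ^ 15 * ↑k) * Phi Ci X
        = (2 ^ 15 * ↑k) * (ε / 128) * (((Xs j).card : ℝ) * Phi Ci {s}) := by
      field_simp
    have h3 : ε ^ 3 * Phi Ci X
        ≤ ((Xs j).card : ℝ) * (ε / 128 * Phi Ci {s} / Phi Ci X) * (2 ^ 15 * ↑k) * Phi Ci X := by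
      rw [hexp]
      have h4 : (2 ^ 15 * (k:ℝ)) * (ε / 128) * ((ε / 32) * Phi Ci (Xs j))
          ≤ (2 ^ 15 * (k:ℝ)) * (ε / 128) * (((Xs j).card : ℝ) * Phi Ci {s}) := by
        apply mul_le_mul_of_nonneg_left h1
        positivity
      have h5 : ε ^ 3 * Phi Ci X ≤ (2 ^ 15 * (k:ℝ)) * (ε / 128) * ((ε / 32) * Phi Ci (Xs j)) := by
        have h6 : (2 ^ 15 * (k:ℝ)) * (ε / 128) * ((ε / 32) * ((ε / (8 * k)) * Phi Ci X))
            ≤ (2 ^ 15 * (k:ℝ)) * (ε / 128) * ((ε / 32) * Phi Ci (Xs j)) := by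
          apply mul_le_mul_of_nonneg_left (mul_le_mul_of_nonneg_left h2 (by positivity))
          positivity
        refine le_trans (le_of_eq ?_) h6
        field_simp
        ring
      linarith
    nlinarith [hpos]
  have hpup : p ≤ ε / 64 := by
    have hms : ((Xs j).card : ℝ) * Phi Ci {s} ≤ 2 * Phi Ci (Xs j) := by
      have := mul_le_mul_of_nonneg_left hsY hmj.le
      calc ((Xs j).card : ℝ) * Phi Ci {s} ≤ ((Xs j).card : ℝ) * (2 / ((Xs j).card : ℝ) * Phi Ci (Xs j)) := this
        _ = 2 * Phi Ci (Xs j) := by field_simp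
    have e : ((Xs j).card : ℝ) * (ε / 128 * Phi Ci {s} / Phi Ci X) * Phi Ci X
        = ε / 128 * (((Xs j).card : ℝ) * Phi Ci {s}) := by
      field_simp
    have goal2 : ((Xs j).card : ℝ) * (ε / 128 * Phi Ci {s} / Phi Ci X) * Phi Ci X
        ≤ ε / 64 * Phi Ci X := by
      rw [e]
      calc ε / 128 * (((Xs j).card : ℝ) * Phi Ci {s}) ≤ ε / 128 * (2 * Phi Ci (Xs j)) :=
          mul_le_mul_of_nonneg_left hms (by positivity)
        _ ≤ ε / 64 * Phi Ci X := by
          have := mul_le_mul_of_nonneg_left hΦXj (le_of_lt hε0)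
          linarith
    rw [hpdef, hq]
    exact le_of_mul_le_mul_right goal2 hpos
  have hp0 : 0 ≤ p := by
    rw [hpdef]; positivity
  have hp1 : p ≤ 1 := by linarith
  have hw0 : ∀ o : Option {x // x ∈ X}, 0 ≤ w o := by
    intro o
    match o with
    | none => rw [hwnone]; linarith
    | some x =>
      by_cases hx : (x : Pt d) ∈ Xs j
      · rw [hwsome x hx]; exact hq0
      · rw [hwsome0 x hx]
  have hg01 : ∀ o : Option {x // x ∈ X}, g o = 0 ∨ g o = 1 := by
    intro o
    match o with
    | none => left; simp [hgdef]
    | some x => right; simp [hgdef]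
  have hsome_eq : ∀ x : {x // x ∈ X}, w (some x) = if (x : Pt d) ∈ Xs j then q else 0 := by
    intro x
    by_cases hx : (x : Pt d) ∈ Xs j
    · rw [hwsome x hx, if_pos hx]
    · rw [hwsome0 x hx, if_neg hx]
  have hsum_some : ∑ x : {x // x ∈ X}, w (some x) = p := by
    calc ∑ x : {x // x ∈ X}, w (some x)
        = ∑ x ∈ X.attach, (fun y => if y ∈ Xs j then q else 0) ↑x := by
          rw [Finset.univ_eq_attach]
          exact Finset.sum_congr rfl fun x _ => hsome_eq x
      _ = ∑ y ∈ X, (if y ∈ Xs j then q else 0) :=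
          Finset.sum_attach X (fun y => if y ∈ Xs j then q else 0)
      _ = ∑ y ∈ X.filter (· ∈ Xs j), q := (Finset.sum_filter _ _).symm
      _ = p := by
          rw [Finset.filter_mem_eq_inter, Finset.inter_eq_right.mpr hsub,
            Finset.sum_const, nsmul_eq_mul, hpdef]
  have hw1 : ∑ o : Option {x // x ∈ X}, w o = 1 := by
    rw [Fintype.sum_option, hwnone, hsum_some]
    ring
  have hwg : ∑ o : Option {x // x ∈ X}, w o * g o = p := by
    rw [Fintype.sum_option]
    have h1 : w none * g none = 0 := by simp [hgdef]
    have h2 : ∀ x : {x // x ∈ X}, w (some x) * g (some x) = w (some x) := by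
      intro x; simp [hgdef]
    rw [h1, Finset.sum_congr rfl fun x _ => h2 x, hsum_some, zero_add]
  constructor
  · -- probability bound
    have hcard : ∀ ω : Fin L → Option {x // x ∈ X},
        (((Finset.univ.filter (fun t : Fin L => (ω t).isSome = true)).card : ℕ) : ℝ)
          = ∑ t, g (ω t) := by
      intro ω
      rw [Finset.card_filter]
      push_cast
      exact Finset.sum_congr rfl fun t _ => by simp [hgdef]
    have htot : ∑ ω : Fin L → Option {x // x ∈ X}, ∏ t, w (ω t) = 1 := by
      have := momentsProd w g (∅ : Finset (Fin L))
      simpa [hw1] using this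
    have hA : (2 ^ 23 * (k:ℝ) ^ 2 / ε ^ 4) ≤ (L : ℝ) := by
      rw [hL]; exact Nat.le_ceil _
    have hLp : 256 * (k:ℝ) / ε ≤ (L : ℝ) * p := by
      have h1 : (2 ^ 23 * (k:ℝ) ^ 2 / ε ^ 4) * (ε ^ 3 / (2 ^ 15 * k)) ≤ (L : ℝ) * p :=
        mul_le_mul hA hplow (by positivity) (by positivity)
      refine le_trans (le_of_eq ?_) h1
      field_simp
      ring
    set M : ℝ := 64 * (k:ℝ) / ε with hM
    have hM0 : 0 < M := by rw [hM]; positivity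
    have hM4 : 4 * M ≤ (L:ℝ) * p := by
      rw [hM]
      refine le_trans (le_of_eq (by ring)) hLp
    have hMle : M ≤ (L : ℝ) * p := by linarith
    have hcheb := cheb w g hw0 hg01 hw1 M (by rw [hwg]; exact hMle)
    rw [hwg] at hcheb
    set B : ℝ := (L : ℝ) * p with hB
    have hBpos : 0 < B := by
      calc (0:ℝ) < 4 * M := by linarith
        _ ≤ B := hM4
    set badsum : ℝ := ∑ ω ∈ Finset.univ.filter
        (fun ω : Fin L → Option {x // x ∈ X} => (∑ t, g (ω t)) < M), ∏ t, w (ω t) with hbs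
    have hbad0 : 0 ≤ badsum := by
      rw [hbs]
      exact Finset.sum_nonneg fun ω _ => Finset.prod_nonneg fun t _ => hw0 _
    -- (B - M)^2 ≥ (9/4) M B
    have hsq : (9 / 4) * M * B ≤ (B - M) ^ 2 := by
      have h3 : 3 / 4 * B ≤ B - M := by linarith
      have h4 : (0:ℝ) ≤ 3 / 4 * B := by linarith
      have h5 : (3 / 4 * B) ^ 2 ≤ (B - M) ^ 2 := pow_le_pow_left₀ h4 h3 2
      nlinarith [hM4, hBpos, hM0]
    have hchain : (9 / 4) * M * B * badsum ≤ B := by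
      have h6 : (9 / 4) * M * B * badsum ≤ (B - M) ^ 2 * badsum :=
        mul_le_mul_of_nonneg_right hsq hbad0
      have h7 : B * (1 - p) ≤ B := by nlinarith [hp0, hBpos]
      calc (9 / 4) * M * B * badsum ≤ (B - M) ^ 2 * badsum := h6
        _ ≤ B * (1 - p) := hcheb
        _ ≤ B := h7
    have hbadle : badsum ≤ 1 / (4 * k) := by
      have h8 : (9 / 4) * M * badsum ≤ 1 := by
        nlinarith [hchain, hBpos, hbad0, hM0]
      rw [hM] at h8
      have h9 : 144 * (k:ℝ) * badsum ≤ ε := by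
        have h10 := mul_le_mul_of_nonneg_left h8 (le_of_lt hε0)
        calc 144 * (k:ℝ) * badsum = ε * (9 / 4 * (64 * (k:ℝ) / ε) * badsum) := by
              field_simp; ring
          _ ≤ ε * 1 := h10
          _ = ε := mul_one ε
      rw [le_div_iff₀ (by positivity : (0:ℝ) < 4 * k)]
      linarith
    -- split good/bad
    have hsplit := Finset.sum_filter_add_sum_filter_not Finset.univ
      (fun ω : Fin L → Option {x // x ∈ X} => (64 * (k:ℝ) / ε : ℝ) ≤
        ((Finset.univ.filter (fun t : Fin L => (ω t).isSome = true)).card : ℝ))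
      (fun ω => ∏ t, w (ω t))
    rw [htot] at hsplit
    have hbadeq : ∑ ω ∈ Finset.univ.filter
        (fun ω : Fin L → Option {x // x ∈ X} => ¬ ((64 * (k:ℝ) / ε : ℝ) ≤
          ((Finset.univ.filter (fun t : Fin L => (ω t).isSome = true)).card : ℝ))),
        ∏ t, w (ω t) = badsum := by
      rw [hbs]
      apply Finset.sum_congr _ (fun ω _ => rfl)
      apply Finset.filter_congr
      intro ω _
      rw [not_le, hcard ω, hM]
    rw [hbadeq] at hsplit
    linarith
  · -- uniformity
    intro A v v' hv hv'
    refine Finset.prod_congr rfl fun t _ => ?_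
    by_cases ht : t ∈ A
    · rw [if_pos ht, if_pos ht]
      show w _ = w _
      rw [hwsome (v t) (hv t), hwsome (v' t) (hv' t)]
    · rw [if_neg ht, if_neg ht]
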